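/- Let T ≥ 1 be an integer, let τ₀ ∈ {0, 1, …, T−1}, let δ be a real number with |δ| ≤ 1/2, and let a : {0, 1, …, T−1} → [0, 1] be such that a_τ ≤ (4/π²)·(τ₀ − τ + δ)^{−4} for every τ with |τ − τ₀| ≥ 2. Then ∑_{τ=0}^{T−1} a_τ·|τ₀ − τ + δ| ≤ 7/2 + 16/π². -/

import Mathlib

open scoped Real

private lemma tel9 (n : ℕ) : ∑ j ∈ Finset.range n, ((1:ℝ)/(j+1) - 1/(j+2)) ≤ 1 := by
  have h := Finset.sum_range_sub' (fun i : ℕ => (1:ℝ)/(i+1)) n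
  have h2 : ∑ j ∈ Finset.range n, ((1:ℝ)/(j+1) - 1/(j+2))
      = 1/((0:ℕ)+1:ℝ) - 1/((n:ℝ)+1) := by
    rw [← h]
    apply Finset.sum_congr rfl
    intro i _
    push_cast
    ring
  rw [h2]
  have : (0:ℝ) ≤ 1/((n:ℝ)+1) := by positivity
  norm_num
  linarith

private lemma tail_bound9 (x d aτ : ℝ) (hd : 2 ≤ d) (hx : d - 1/2 ≤ |x|)
    (ha0 : 0 ≤ aτ) (ha : aτ ≤ (4/π^2)/x^4) :
    aτ * |x| ≤ (8/(3*π^2)) * (1/(d-1) - 1/d) := by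
  have hπ2 : (0:ℝ) < π^2 := by positivity
  have hy : (3/2 : ℝ) ≤ |x| := by linarith
  have hy0 : (0:ℝ) < |x| := by linarith
  have hx4 : x^4 = |x|^4 := by
    rw [← abs_pow]
    exact (abs_of_nonneg (by positivity)).symm
  have hd1 : (0:ℝ) < d - 1 := by linarith
  have hd0 : (0:ℝ) < d := by linarith
  have hkey : 3*((d-1)*d) ≤ 2*|x|^3 := by
    have hsq : (d - 1/2)^2 ≤ |x|^2 := by nlinarith
    nlinarith [sq_nonneg (|x|), hsq]
  have key1 : aτ * |x| ≤ (4/π^2) / |x|^3 := by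
    have ha' : aτ ≤ (4/π^2)/|x|^4 := by rwa [hx4] at ha
    calc aτ * |x| ≤ ((4/π^2)/|x|^4) * |x| :=
          mul_le_mul_of_nonneg_right ha' (abs_nonneg x)
      _ = (4/π^2) / |x|^3 := by
          field_simp
  have core : 4/|x|^3 ≤ (8/3)/((d-1)*d) := by
    rw [div_le_div_iff₀ (by positivity) (by positivity)]
    nlinarith [hkey]
  have h1 : (1:ℝ)/(d-1) - 1/d = 1/((d-1)*d) := by
    field_simp
    ring
  calc aτ * |x| ≤ (4/π^2) / |x|^3 := key1
    _ = (1/π^2) * (4/|x|^3) := by ring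
    _ ≤ (1/π^2) * ((8/3)/((d-1)*d)) :=
        mul_le_mul_of_nonneg_left core (by positivity)
    _ = (8/(3*π^2)) * (1/((d-1)*d)) := by ring
    _ = (8/(3*π^2)) * (1/(d-1) - 1/d) := by rw [h1]

private lemma left_tel9 (τ₀ : ℕ) :
    ∑ τ ∈ Finset.range (τ₀ - 1), ((1:ℝ)/((τ₀:ℝ)-(τ:ℝ)-1) - 1/((τ₀:ℝ)-(τ:ℝ))) ≤ 1 := by
  have heq : ∑ τ ∈ Finset.range (τ₀ - 1), ((1:ℝ)/((τ₀:ℝ)-(τ:ℝ)-1) - 1/((τ₀:ℝ)-(τ:ℝ)))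
      = ∑ j ∈ Finset.range (τ₀ - 1), ((1:ℝ)/((j:ℝ)+1) - 1/((j:ℝ)+2)) := by
    rw [← Finset.sum_range_reflect (fun j : ℕ => (1:ℝ)/((j:ℝ)+1) - 1/((j:ℝ)+2)) (τ₀-1)]
    apply Finset.sum_congr rfl
    intro τ hτ
    simp only [Finset.mem_range] at hτ
    have h2 : τ₀ - 1 - 1 - τ = τ₀ - (τ + 2) := by omega
    have hle : τ + 2 ≤ τ₀ := by omega
    simp only [h2]
    rw [Nat.cast_sub hle]
    push_cast
    ring
  rw [heq]
  exact tel9 _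

/-- First absolute moment of the QPE mismatch in the HHL analysis: if `0 ≤ a τ ≤ 1`
for all `τ < T` and `a τ ≤ (4/π²)·(τ₀ − τ + δ)⁻⁴` whenever `|τ − τ₀| ≥ 2`, then
`∑_{τ=0}^{T−1} a τ·|τ₀ − τ + δ| ≤ 7/2 + 16/π²`. -/
theorem stmt_9 (T : ℕ) (hT : 1 ≤ T) (τ₀ : ℕ) (hτ₀ : τ₀ < T)
    (δ : ℝ) (hδ : |δ| ≤ 1 / 2) (a : ℕ → ℝ)
    (ha : ∀ τ < T, a τ ∈ Set.Icc (0 : ℝ) 1)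
    (ha' : ∀ τ < T, 2 ≤ |(τ : ℝ) - (τ₀ : ℝ)| →
      a τ ≤ (4 / π ^ 2) / ((τ₀ : ℝ) - (τ : ℝ) + δ) ^ 4) :
    ∑ τ ∈ Finset.range T, a τ * |(τ₀ : ℝ) - (τ : ℝ) + δ| ≤ 7 / 2 + 16 / π ^ 2 := by
  have hπ2 : (0:ℝ) < π^2 := by positivity
  have hδ' := abs_le.mp hδ
  set b : ℕ → ℝ := fun τ => a τ * |(τ₀ : ℝ) - (τ : ℝ) + δ| with hbdef
  set B := Finset.range (τ₀ - 1) with hB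
  set C := Finset.Ico (τ₀ + 2) T with hC
  have hBC : Disjoint B C := by
    rw [Finset.disjoint_left]
    intro τ hτ hτ'
    simp only [hB, hC, Finset.mem_range, Finset.mem_Ico] at hτ hτ'
    omega
  have hsub : B ∪ C ⊆ Finset.range T := by
    intro τ hτ
    simp only [hB, hC, Finset.mem_union, Finset.mem_range, Finset.mem_Ico] at *
    omega
  have hsplit : ∑ τ ∈ Finset.range T, b τ
      = ∑ τ ∈ Finset.range T \ (B ∪ C), b τ + ∑ τ ∈ B ∪ C, b τ :=
    (Finset.sum_sdiff hsub).symm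
  -- center
  have hτ₀mem : τ₀ ∈ Finset.range T \ (B ∪ C) := by
    simp only [Finset.mem_sdiff, Finset.mem_union, hB, hC, Finset.mem_range, Finset.mem_Ico]
    omega
  have hcenter : ∑ τ ∈ Finset.range T \ (B ∪ C), b τ ≤ 7/2 := by
    have herase : ∑ τ ∈ (Finset.range T \ (B ∪ C)).erase τ₀, b τ + b τ₀
        = ∑ τ ∈ Finset.range T \ (B ∪ C), b τ :=
      Finset.sum_erase_add _ _ hτ₀mem
    have hbτ₀ : b τ₀ ≤ 1/2 := by
      have h0 := ha τ₀ (by omega)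
      have : ((τ₀:ℝ) - (τ₀:ℝ) + δ) = δ := by ring
      simp only [hbdef, this]
      calc a τ₀ * |δ| ≤ 1 * |δ| :=
            mul_le_mul_of_nonneg_right h0.2 (abs_nonneg δ)
        _ = |δ| := one_mul _
        _ ≤ 1/2 := hδ
    have hsubpair : (Finset.range T \ (B ∪ C)).erase τ₀ ⊆ {τ₀ - 1, τ₀ + 1} := by
      intro τ hτ
      simp only [Finset.mem_erase, Finset.mem_sdiff, Finset.mem_union, hB, hC,
        Finset.mem_range, Finset.mem_Ico, Finset.mem_insert, Finset.mem_singleton] at *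
      omega
    have hcard : ((Finset.range T \ (B ∪ C)).erase τ₀).card ≤ 2 := by
      calc ((Finset.range T \ (B ∪ C)).erase τ₀).card
          ≤ ({τ₀ - 1, τ₀ + 1} : Finset ℕ).card := Finset.card_le_card hsubpair
        _ ≤ 2 := le_trans (Finset.card_insert_le _ _) (by simp)
    have hterm : ∀ τ ∈ (Finset.range T \ (B ∪ C)).erase τ₀, b τ ≤ 3/2 := by
      intro τ hτ
      simp only [Finset.mem_erase, Finset.mem_sdiff, Finset.mem_union, hB, hC,
        Finset.mem_range, Finset.mem_Ico] at hτ
      have hτT : τ < T := hτ.2.1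
      have h0 := ha τ hτT
      have habs : |(τ₀:ℝ) - (τ:ℝ) + δ| ≤ 3/2 := by
        have h1 : (τ₀:ℝ) - (τ:ℝ) ≤ 1 := by
          have : τ₀ ≤ τ + 1 := by omega
          have := (Nat.cast_le (α := ℝ)).mpr this
          push_cast at this
          linarith
        have h2 : -1 ≤ (τ₀:ℝ) - (τ:ℝ) := by
          have : τ ≤ τ₀ + 1 := by omega
          have := (Nat.cast_le (α := ℝ)).mpr this
          push_cast at this
          linarith
        rw [abs_le]
        constructor <;> linarith
      calc b τ = a τ * |(τ₀:ℝ) - (τ:ℝ) + δ| := rfl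
        _ ≤ 1 * |(τ₀:ℝ) - (τ:ℝ) + δ| :=
            mul_le_mul_of_nonneg_right h0.2 (abs_nonneg _)
        _ ≤ 3/2 := by rw [one_mul]; exact habs
    have hsum2 : ∑ τ ∈ (Finset.range T \ (B ∪ C)).erase τ₀, b τ ≤ 3 := by
      calc ∑ τ ∈ (Finset.range T \ (B ∪ C)).erase τ₀, b τ
          ≤ ((Finset.range T \ (B ∪ C)).erase τ₀).card • (3/2 : ℝ) :=
            Finset.sum_le_card_nsmul _ _ _ hterm
        _ = (((Finset.range T \ (B ∪ C)).erase τ₀).card : ℝ) * (3/2) := by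
            rw [nsmul_eq_mul]
        _ ≤ 2 * (3/2) := by
            apply mul_le_mul_of_nonneg_right _ (by norm_num)
            exact_mod_cast hcard
        _ = 3 := by norm_num
    linarith [herase]
  -- left tail
  have hleft : ∑ τ ∈ B, b τ ≤ 8/(3*π^2) := by
    calc ∑ τ ∈ B, b τ
        ≤ ∑ τ ∈ B, (8/(3*π^2)) * ((1:ℝ)/((τ₀:ℝ)-(τ:ℝ)-1) - 1/((τ₀:ℝ)-(τ:ℝ))) := by
          apply Finset.sum_le_sum
          intro τ hτ
          simp only [hB, Finset.mem_range] at hτ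
          have hle : τ + 2 ≤ τ₀ := by omega
          have hτT : τ < T := by omega
          have hd : (2:ℝ) ≤ (τ₀:ℝ) - (τ:ℝ) := by
            have := (Nat.cast_le (α := ℝ)).mpr hle
            push_cast at this
            linarith
          have hx : (τ₀:ℝ) - (τ:ℝ) - 1/2 ≤ |(τ₀:ℝ) - (τ:ℝ) + δ| := by
            calc (τ₀:ℝ) - (τ:ℝ) - 1/2 ≤ (τ₀:ℝ) - (τ:ℝ) + δ := by linarith [hδ'.1]
              _ ≤ |(τ₀:ℝ) - (τ:ℝ) + δ| := le_abs_self _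
          have habs2 : 2 ≤ |(τ:ℝ) - (τ₀:ℝ)| := by
            rw [abs_sub_comm, abs_of_nonneg (by linarith)]
            linarith
          exact tail_bound9 _ _ _ hd hx (ha τ hτT).1 (ha' τ hτT habs2)
      _ = (8/(3*π^2)) * ∑ τ ∈ B, ((1:ℝ)/((τ₀:ℝ)-(τ:ℝ)-1) - 1/((τ₀:ℝ)-(τ:ℝ))) :=
          (Finset.mul_sum _ _ _).symm
      _ ≤ (8/(3*π^2)) * 1 :=
          mul_le_mul_of_nonneg_left (left_tel9 τ₀) (by positivity)
      _ = 8/(3*π^2) := mul_one _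
  -- right tail
  have hright : ∑ τ ∈ C, b τ ≤ 8/(3*π^2) := by
    calc ∑ τ ∈ C, b τ
        ≤ ∑ τ ∈ C, (8/(3*π^2)) * ((1:ℝ)/((τ:ℝ)-(τ₀:ℝ)-1) - 1/((τ:ℝ)-(τ₀:ℝ))) := by
          apply Finset.sum_le_sum
          intro τ hτ
          simp only [hC, Finset.mem_Ico] at hτ
          have hle : τ₀ + 2 ≤ τ := hτ.1
          have hτT : τ < T := hτ.2
          have hd : (2:ℝ) ≤ (τ:ℝ) - (τ₀:ℝ) := by
            have := (Nat.cast_le (α := ℝ)).mpr hle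
            push_cast at this
            linarith
          have hx : (τ:ℝ) - (τ₀:ℝ) - 1/2 ≤ |(τ₀:ℝ) - (τ:ℝ) + δ| := by
            calc (τ:ℝ) - (τ₀:ℝ) - 1/2 ≤ -((τ₀:ℝ) - (τ:ℝ) + δ) := by linarith [hδ'.2]
              _ ≤ |(τ₀:ℝ) - (τ:ℝ) + δ| := neg_le_abs _
          have habs2 : 2 ≤ |(τ:ℝ) - (τ₀:ℝ)| := by
            rw [abs_of_nonneg (by linarith)]
            linarith
          exact tail_bound9 _ _ _ hd hx (ha τ hτT).1 (ha' τ hτT habs2)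
      _ = ∑ j ∈ Finset.range (T - (τ₀ + 2)),
            (8/(3*π^2)) * ((1:ℝ)/((j:ℝ)+1) - 1/((j:ℝ)+2)) := by
          rw [hC, Finset.sum_Ico_eq_sum_range]
          apply Finset.sum_congr rfl
          intro j _
          push_cast
          ring_nf
      _ = (8/(3*π^2)) * ∑ j ∈ Finset.range (T - (τ₀ + 2)), ((1:ℝ)/((j:ℝ)+1) - 1/((j:ℝ)+2)) :=
          (Finset.mul_sum _ _ _).symm
      _ ≤ (8/(3*π^2)) * 1 :=
          mul_le_mul_of_nonneg_left (tel9 _) (by positivity)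
      _ = 8/(3*π^2) := mul_one _
  have hBCsum : ∑ τ ∈ B ∪ C, b τ = ∑ τ ∈ B, b τ + ∑ τ ∈ C, b τ :=
    Finset.sum_union hBC
  have hfinal : 8/(3*π^2) + 8/(3*π^2) ≤ 16/π^2 := by
    rw [← add_div]
    rw [div_le_div_iff₀ (by positivity) (by positivity)]
    nlinarith [hπ2]
  calc ∑ τ ∈ Finset.range T, a τ * |(τ₀ : ℝ) - (τ : ℝ) + δ|
      = ∑ τ ∈ Finset.range T, b τ := rfl
    _ = ∑ τ ∈ Finset.range T \ (B ∪ C), b τ + ∑ τ ∈ B ∪ C, b τ := hsplit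
    _ ≤ 7/2 + (8/(3*π^2) + 8/(3*π^2)) := by
        rw [hBCsum]
        have := add_le_add hleft hright
        linarith [hcenter]
    _ ≤ 7/2 + 16/π^2 := by linarith [hfinal]
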